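/- Let F be a field, r ≥ 1 and a ≥ 1 integers, and let A_1,…,A_r ⊆ F each have size a. Then the grid A_1 × ⋯ × A_r ⊆ F^r, a set of k = a^r points, is algebraically spread; in fact the following stronger property holds: for every positive integer n, every polynomial f ∈ F[x_1,…,x_r] of degree less than a·n with mult(f,p) ≥ n for all p ∈ A_1 × ⋯ × A_r is the zero polynomial. -/

import Mathlib

/-- The Hasse derivative `H^α f`: the coefficient of `y^α` in `f(x+y)`. -/
noncomputable def mvHasseDeriv {F : Type*} [CommSemiring F] {d : ℕ}
    (α : Fin d →₀ ℕ) (f : MvPolynomial (Fin d) F) : MvPolynomial (Fin d) F :=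
  MvPolynomial.coeff α
    (MvPolynomial.eval₂ (MvPolynomial.C.comp MvPolynomial.C)
      (fun i => MvPolynomial.X i + MvPolynomial.C (MvPolynomial.X i)) f)

/-- `mult(f,p) ≥ n`: all Hasse derivatives of order `< n` vanish at `p`. -/
def MultGE {F : Type*} [CommSemiring F] {d : ℕ}
    (f : MvPolynomial (Fin d) F) (p : Fin d → F) (n : ℕ) : Prop :=
  ∀ α : Fin d →₀ ℕ, (∑ i, α i) < n → MvPolynomial.eval p (mvHasseDeriv α f) = 0

/-- A finite point set `P ⊆ F^r` is algebraically spread. -/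
def AlgebraicallySpread (F : Type*) [Field F] (r : ℕ) (P : Set (Fin r → F)) : Prop :=
  P.Finite ∧ ∀ ε : ℝ, 0 < ε → ∃ n₀ : ℕ, ∀ n : ℕ, n₀ < n →
    ∀ f : MvPolynomial (Fin r) F,
      (f.totalDegree : ℝ) < (1 - ε) * (P.ncard : ℝ) ^ ((1:ℝ)/(r:ℝ)) * (n:ℝ) →
      (∀ p ∈ P, MultGE f p n) → f = 0


open MvPolynomial

namespace GridSpreadAux

variable {F : Type} [Field F]

/-- The shift-by-`p` algebra homomorphism `f(x) ↦ f(x + p)`. -/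
noncomputable def shiftAt {d : ℕ} (p : Fin d → F) :
    MvPolynomial (Fin d) F →ₐ[F] MvPolynomial (Fin d) F :=
  aeval (fun i => X i + C (p i))

theorem eval_mvHasseDeriv {d : ℕ} (p : Fin d → F) (α : Fin d →₀ ℕ)
    (f : MvPolynomial (Fin d) F) :
    MvPolynomial.eval p (mvHasseDeriv α f) = coeff α (shiftAt p f) := by
  have step1 : MvPolynomial.eval p (mvHasseDeriv α f) =
      coeff α (MvPolynomial.map (MvPolynomial.eval p)
        (eval₂ (MvPolynomial.C.comp MvPolynomial.C)
          (fun i => X i + C (X i)) f)) := by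
    rw [coeff_map]; rfl
  rw [step1, eval₂_comp_left (MvPolynomial.map (MvPolynomial.eval p))]
  have h1 : (MvPolynomial.map (MvPolynomial.eval p)).comp
      ((C : MvPolynomial (Fin d) F →+* MvPolynomial (Fin d) (MvPolynomial (Fin d) F)).comp
        (C : F →+* MvPolynomial (Fin d) F))
      = (C : F →+* MvPolynomial (Fin d) F) := by
    ext a; simp
  rw [h1]
  have h2 : ((MvPolynomial.map (MvPolynomial.eval p)) ∘ fun i => X i + C (X i))
      = fun i : Fin d => X i + C (p i) := by
    funext i; simp
  rw [h2, shiftAt, aeval_def, algebraMap_eq]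

theorem multGE_iff {d : ℕ} (f : MvPolynomial (Fin d) F) (p : Fin d → F) (n : ℕ) :
    MultGE f p n ↔ ∀ α : Fin d →₀ ℕ, (∑ i, α i) < n → coeff α (shiftAt p f) = 0 := by
  unfold MultGE
  constructor
  · intro h α hα; rw [← eval_mvHasseDeriv]; exact h α hα
  · intro h α hα; rw [eval_mvHasseDeriv]; exact h α hα

/-- All coefficients of (total) degree `< n` vanish. -/
def LowV {d : ℕ} (n : ℕ) (g : MvPolynomial (Fin d) F) : Prop :=
  ∀ α : Fin d →₀ ℕ, (∑ i, α i) < n → coeff α g = 0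

theorem sum_univ_eq_sum (α : Fin r →₀ ℕ) : (α.sum fun _ e => e) = ∑ i, α i :=
  Finsupp.sum_fintype _ _ (fun _ => rfl)

theorem sum_add_apply {r : ℕ} (α β : Fin r →₀ ℕ) :
    (∑ i, (α + β) i) = (∑ i, α i) + ∑ i, β i := by
  simp [Finsupp.add_apply, Finset.sum_add_distrib]

theorem sum_single_apply {r : ℕ} (j : Fin r) (k : ℕ) :
    (∑ i, (Finsupp.single j k) i) = k := by
  simp [Finsupp.single_apply]

theorem sum_pos_of_ne_zero {r : ℕ} {β : Fin r →₀ ℕ} (h : β ≠ 0) : 0 < ∑ i, β i := by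
  rcases Nat.eq_zero_or_pos (∑ i, β i) with h0 | h0
  · exfalso; apply h
    ext i
    exact Finset.sum_eq_zero_iff.mp h0 i (Finset.mem_univ i)
  · exact h0

theorem lowV_X_mul {d n : ℕ} {j : Fin d} {u : MvPolynomial (Fin d) F}
    (h : LowV n (X j * u)) : LowV (n - 1) u := by
  intro α hα
  have hmem := h (Finsupp.single j 1 + α) (by
    rw [sum_add_apply, sum_single_apply]; omega)
  rwa [coeff_X_mul] at hmem

theorem lowV_of_mul_left {d m : ℕ} {h u : MvPolynomial (Fin d) F}
    (h0 : coeff 0 h ≠ 0) (hm : LowV m (h * u)) : LowV m u := by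
  classical
  have key : ∀ k, ∀ α : Fin d →₀ ℕ, (∑ i, α i) = k → k < m → coeff α u = 0 := by
    intro k
    induction k using Nat.strong_induction_on with
    | _ k IH =>
      intro α hk hkm
      have hcm : coeff α (h * u) = 0 := hm α (by omega)
      rw [coeff_mul] at hcm
      rw [Finset.sum_eq_single ((0 : Fin d →₀ ℕ), α)] at hcm
      · exact (mul_eq_zero.mp hcm).resolve_left h0
      · rintro ⟨β, γ⟩ hmem hne
        rw [Finset.HasAntidiagonal.mem_antidiagonal] at hmem
        have hβ : β ≠ 0 := by
          rintro rfl
          apply hne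
          simp only [Prod.mk.injEq]
          exact ⟨trivial, by simpa using hmem⟩
        have hγ : coeff γ u = 0 := by
          refine IH (∑ i, γ i) ?_ γ rfl ?_
          · have := sum_add_apply β γ
            rw [hmem] at this
            have hb := sum_pos_of_ne_zero hβ
            omega
          · have := sum_add_apply β γ
            rw [hmem] at this
            omega
        simp [hγ]
      · intro hnot
        exact absurd (Finset.HasAntidiagonal.mem_antidiagonal.mpr (zero_add α)) hnot
  intro α hα
  exact key _ α rfl hα

theorem totalDegree_lt_imp_coeff_zero {d : ℕ} {f : MvPolynomial (Fin d) F}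
    {α : Fin d →₀ ℕ} (h : f.totalDegree < ∑ i, α i) : coeff α f = 0 := by
  apply coeff_eq_zero_of_totalDegree_lt
  have : (∑ i ∈ α.support, α i) = α.sum fun _ e => e := rfl
  rw [this, sum_univ_eq_sum]
  exact h

theorem sum_le_totalDegree {d : ℕ} {f : MvPolynomial (Fin d) F} {α : Fin d →₀ ℕ}
    (h : α ∈ f.support) : (∑ i, α i) ≤ f.totalDegree := by
  rw [← sum_univ_eq_sum]
  exact le_totalDegree h

end GridSpreadAux

namespace GridSpreadAux

open MvPolynomial

variable {F : Type} [Field F] {r : ℕ}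

/-- Substitute `t` for the variable `0`. -/
noncomputable def restAt (t : F) :
    MvPolynomial (Fin (r + 1)) F →ₐ[F] MvPolynomial (Fin r) F :=
  aeval (Fin.cases (C t) X)

theorem my_finSuccEquiv_C (a : F) :
    finSuccEquiv F r (C a) = Polynomial.C (C a) := by
  simp [finSuccEquiv_apply]

theorem restAt_eq_eval (t : F) (f : MvPolynomial (Fin (r + 1)) F) :
    restAt t f = Polynomial.eval (C t) (finSuccEquiv F r f) := by
  induction f using MvPolynomial.induction_on with
  | C a => simp [restAt, my_finSuccEquiv_C, algebraMap_eq]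
  | add p q hp hq => simp [map_add, hp, hq]
  | mul_X p i hp =>
    rw [map_mul, map_mul, Polynomial.eval_mul, hp]
    congr 1
    induction i using Fin.cases with
    | zero => simp [restAt, finSuccEquiv_X_zero]
    | succ j => simp [restAt, finSuccEquiv_X_succ]

theorem shift_restAt (p : Fin (r + 1) → F) (f : MvPolynomial (Fin (r + 1)) F) :
    shiftAt (fun j => p j.succ) (restAt (p 0) f) = restAt 0 (shiftAt p f) := by
  have h : (shiftAt (fun j => p j.succ)).comp (restAt (p 0))
      = (restAt (0 : F)).comp (shiftAt p) := by
    apply MvPolynomial.algHom_ext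
    intro i
    induction i using Fin.cases with
    | zero => simp [shiftAt, restAt, algebraMap_eq]
    | succ j => simp [shiftAt, restAt, algebraMap_eq]
  exact DFunLike.congr_fun h f

theorem coeff_restAt_zero (G : MvPolynomial (Fin (r + 1)) F) (α : Fin r →₀ ℕ) :
    coeff α (restAt 0 G) = coeff (α.cons 0) G := by
  rw [restAt_eq_eval, map_zero, ← Polynomial.coeff_zero_eq_eval_zero,
    finSuccEquiv_coeff_coeff]

theorem sum_cons_zero (α : Fin r →₀ ℕ) :
    (∑ i, (α.cons 0) i) = ∑ i, α i := by
  rw [Fin.sum_univ_succ]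
  simp [Finsupp.cons_zero, Finsupp.cons_succ]

theorem lowV_restAt {n : ℕ} {G : MvPolynomial (Fin (r + 1)) F} (h : LowV n G) :
    LowV n (restAt 0 G) := by
  intro α hα
  rw [coeff_restAt_zero]
  exact h _ (by rwa [sum_cons_zero])

theorem totalDegree_restAt_le (t : F) (f : MvPolynomial (Fin (r + 1)) F) :
    (restAt t f).totalDegree ≤ f.totalDegree := by
  rw [restAt_eq_eval, Polynomial.eval_eq_sum_range]
  refine le_trans (totalDegree_finset_sum _ _) ?_
  apply Finset.sup_le
  intro j _
  by_cases h : (finSuccEquiv F r f).coeff j = 0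
  · simp [h]
  · refine le_trans (totalDegree_mul _ _) ?_
    have h1 := totalDegree_coeff_finSuccEquiv_add_le f j h
    have h2 : ((C t : MvPolynomial (Fin r) F) ^ j).totalDegree = 0 := by
      rw [← map_pow]; exact totalDegree_C _
    omega

theorem dvd_of_restAt_eq_zero {t : F} {f : MvPolynomial (Fin (r + 1)) F}
    (h : restAt t f = 0) : (X 0 - C t) ∣ f := by
  have hr : (Polynomial.X - Polynomial.C (C t)) ∣ finSuccEquiv F r f := by
    rw [Polynomial.dvd_iff_isRoot, Polynomial.IsRoot]
    rw [← restAt_eq_eval]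
    exact h
  obtain ⟨q, hq⟩ := hr
  refine ⟨(finSuccEquiv F r).symm q, ?_⟩
  apply (finSuccEquiv F r).injective
  rw [map_mul, AlgEquiv.apply_symm_apply, hq, map_sub, finSuccEquiv_X_zero,
    my_finSuccEquiv_C]

theorem X_sub_C_ne_zero (t : F) : (X 0 - C t : MvPolynomial (Fin (r + 1)) F) ≠ 0 := by
  intro h
  have := congrArg (coeff (Finsupp.single 0 1)) h
  rw [coeff_sub, coeff_X, coeff_C] at this
  have hcond : ¬((0 : Fin (r + 1) →₀ ℕ) = Finsupp.single 0 1) := by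
    intro hh
    exact one_ne_zero (Finsupp.single_eq_zero.mp hh.symm)
  rw [if_neg hcond] at this
  simp at this

theorem totalDegree_linear_mul (t : F) {u : MvPolynomial (Fin (r + 1)) F} (hu : u ≠ 0) :
    ((X 0 - C t) * u).totalDegree = 1 + u.totalDegree := by
  apply le_antisymm
  · refine le_trans (totalDegree_mul _ _) ?_
    have h1 : (X (0 : Fin (r + 1)) - C t).totalDegree ≤ 1 := by
      rw [sub_eq_add_neg, ← map_neg C t]
      refine le_trans (totalDegree_add _ _) ?_
      simp [totalDegree_X, totalDegree_C]
    omega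
  · obtain ⟨α, hαs, hαd⟩ := Finset.exists_mem_eq_sup u.support
      (support_nonempty.mpr hu) (fun s => s.sum fun _ e => e)
    have hdeg : (∑ i, α i) = u.totalDegree := by
      rw [← sum_univ_eq_sum]; exact hαd.symm
    have hCu : coeff (Finsupp.single 0 1 + α) (C t * u) = 0 := by
      rw [coeff_C_mul]
      rw [totalDegree_lt_imp_coeff_zero
        (by rw [sum_add_apply, sum_single_apply]; omega)]
      ring
    have key : coeff (Finsupp.single 0 1 + α) ((X 0 - C t) * u) = coeff α u := by
      rw [sub_mul, coeff_sub, coeff_X_mul, hCu, sub_zero]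
    have hmem : (Finsupp.single (0 : Fin (r + 1)) 1 + α) ∈ ((X 0 - C t) * u).support := by
      rw [mem_support_iff, key]
      exact mem_support_iff.mp hαs
    have hle := sum_le_totalDegree hmem
    rw [sum_add_apply, sum_single_apply] at hle
    omega

theorem extract_prod (s : Finset F) :
    ∀ f : MvPolynomial (Fin (r + 1)) F, (∀ t ∈ s, restAt t f = 0) →
    ∃ f', f = (∏ t ∈ s, (X 0 - C t)) * f' := by
  classical
  induction s using Finset.induction_on with
  | empty => intro f _; exact ⟨f, by simp⟩
  | insert t s ht IH =>
    intro f hf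
    obtain ⟨f₁, hf₁⟩ := dvd_of_restAt_eq_zero (hf t (Finset.mem_insert_self t s))
    have hs : ∀ t' ∈ s, restAt t' f₁ = 0 := by
      intro t' ht'
      have h0 := hf t' (Finset.mem_insert_of_mem ht')
      rw [hf₁, map_mul] at h0
      have hlin : restAt t' (X 0 - C t : MvPolynomial (Fin (r + 1)) F) = C (t' - t) := by
        rw [map_sub]
        simp [restAt, algebraMap_eq, map_sub]
      rw [hlin] at h0
      have hne : (C (t' - t) : MvPolynomial (Fin r) F) ≠ 0 := by
        rw [Ne, C_eq_zero]
        exact sub_ne_zero.mpr (fun hh => ht (hh ▸ ht'))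
      exact (mul_eq_zero.mp h0).resolve_left hne
    obtain ⟨f', hf'⟩ := IH f₁ hs
    refine ⟨f', ?_⟩
    rw [Finset.prod_insert ht, mul_assoc, ← hf', ← hf₁]

theorem totalDegree_prod_linear_mul (s : Finset F) {u : MvPolynomial (Fin (r + 1)) F}
    (hu : u ≠ 0) :
    ((∏ t ∈ s, (X 0 - C t)) * u).totalDegree = s.card + u.totalDegree := by
  classical
  induction s using Finset.induction_on with
  | empty => simp
  | insert t s ht IH =>
    rw [Finset.prod_insert ht, mul_assoc, totalDegree_linear_mul t
      (mul_ne_zero (Finset.prod_ne_zero_iff.mpr fun t' _ => X_sub_C_ne_zero t') hu),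
      IH, Finset.card_insert_of_notMem ht]
    omega

end GridSpreadAux

namespace GridSpreadAux

open MvPolynomial

variable {F : Type} [Field F] {r : ℕ}

theorem shiftAt_linear (p : Fin (r + 1) → F) (t : F) :
    shiftAt p (X 0 - C t : MvPolynomial (Fin (r + 1)) F) = X 0 + C (p 0 - t) := by
  have hC : (C (p 0 - t) : MvPolynomial (Fin (r + 1)) F) = C (p 0) - C t := map_sub _ _ _
  rw [map_sub, hC, shiftAt, aeval_X, aeval_C, algebraMap_eq]
  ring

theorem shift_grid_prod [DecidableEq F] (A0 : Finset F) (p : Fin (r + 1) → F) (hp0 : p 0 ∈ A0) :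
    shiftAt p (∏ t ∈ A0, (X 0 - C t : MvPolynomial (Fin (r + 1)) F)) =
      X 0 * ∏ t ∈ A0.erase (p 0), (X 0 + C (p 0 - t)) := by
  classical
  rw [map_prod]
  have h1 : ∀ t ∈ A0, shiftAt p (X 0 - C t : MvPolynomial (Fin (r + 1)) F)
      = X 0 + C (p 0 - t) := fun t _ => shiftAt_linear p t
  rw [Finset.prod_congr rfl h1]
  rw [← Finset.mul_prod_erase A0 _ hp0]
  congr 1
  simp

theorem coeff_zero_grid_prod_ne [DecidableEq F] (A0 : Finset F) (p : Fin (r + 1) → F) (_hp0 : p 0 ∈ A0) :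
    coeff 0 (∏ t ∈ A0.erase (p 0), (X 0 + C (p 0 - t) : MvPolynomial (Fin (r + 1)) F)) ≠ 0 := by
  classical
  rw [← constantCoeff_eq]
  show constantCoeff (∏ t ∈ A0.erase (p 0), (X 0 + C (p 0 - t) : MvPolynomial (Fin (r + 1)) F)) ≠ 0
  rw [map_prod]
  have h1 : ∀ t ∈ A0.erase (p 0),
      constantCoeff (X 0 + C (p 0 - t) : MvPolynomial (Fin (r + 1)) F) = p 0 - t := by
    intro t _
    rw [map_add, constantCoeff_X, constantCoeff_C, zero_add]
  rw [Finset.prod_congr rfl h1]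
  apply Finset.prod_ne_zero_iff.mpr
  intro t ht
  exact sub_ne_zero.mpr (Ne.symm (Finset.mem_erase.mp ht).1)

theorem lowV_shift_quotient {n : ℕ} (A0 : Finset F) (p : Fin (r + 1) → F) (hp0 : p 0 ∈ A0)
    (f' : MvPolynomial (Fin (r + 1)) F)
    (hm : LowV n (shiftAt p ((∏ t ∈ A0, (X 0 - C t)) * f'))) :
    LowV (n - 1) (shiftAt p f') := by
  classical
  rw [map_mul, shift_grid_prod A0 p hp0, mul_assoc] at hm
  exact lowV_of_mul_left (coeff_zero_grid_prod_ne A0 p hp0) (lowV_X_mul hm)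

theorem main_lemma (a : ℕ) : ∀ r : ℕ, ∀ n : ℕ, 0 < n →
    ∀ A : Fin r → Finset F, (∀ i, (A i).card = a) →
    ∀ f : MvPolynomial (Fin r) F, f.totalDegree < a * n →
    (∀ p : Fin r → F, (∀ i, p i ∈ A i) → LowV n (shiftAt p f)) → f = 0 := by
  classical
  intro r
  induction r with
  | zero =>
    intro n hn A hA f _ hmult
    have hp : ∀ i : Fin 0, (fun j : Fin 0 => j.elim0 : Fin 0 → F) i ∈ A i := fun i => i.elim0
    have h0 := hmult _ hp 0 (by simpa using hn)
    have hshift : shiftAt (fun j : Fin 0 => j.elim0) f = f := by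
      have : shiftAt (fun j : Fin 0 => j.elim0) = AlgHom.id F (MvPolynomial (Fin 0) F) := by
        apply MvPolynomial.algHom_ext
        intro i
        exact i.elim0
      rw [this]; rfl
    rw [hshift] at h0
    ext α
    have hα : α = 0 := by ext i; exact i.elim0
    rw [hα, h0, coeff_zero]
  | succ r IHr =>
    intro n
    induction n using Nat.strong_induction_on with
    | _ n IHn =>
      intro hn A hA f hdeg hmult
      by_contra hf0
      have hrest : ∀ t ∈ A 0, restAt t f = 0 := by
        intro t ht
        apply IHr n hn (fun i => A i.succ) (fun i => hA i.succ)
        · exact lt_of_le_of_lt (totalDegree_restAt_le t f) hdeg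
        · intro p' hp'
          have hgrid : ∀ i, (Fin.cases t p' : Fin (r + 1) → F) i ∈ A i := by
            intro i
            induction i using Fin.cases with
            | zero => simpa using ht
            | succ j => simpa using hp' j
          have hG := hmult (Fin.cases t p') hgrid
          have hsq := shift_restAt (Fin.cases t p') f
          simp only [Fin.cases_zero, Fin.cases_succ] at hsq
          rw [hsq]
          exact lowV_restAt hG
      obtain ⟨f', hf'⟩ := extract_prod (A 0) f hrest
      have hf'0 : f' ≠ 0 := fun h => hf0 (by rw [hf', h, mul_zero])
      have hdegsum := totalDegree_prod_linear_mul (A 0) hf'0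
      rw [← hf', hA 0] at hdegsum
      rcases Nat.lt_or_ge 1 n with hn2 | hn1
      · have hmult' : ∀ p : Fin (r + 1) → F, (∀ i, p i ∈ A i) →
            LowV (n - 1) (shiftAt p f') := by
          intro p hp
          have hm := hmult p hp
          rw [hf'] at hm
          exact lowV_shift_quotient (A 0) p (hp 0) f' hm
        have hdeg' : f'.totalDegree < a * (n - 1) := by
          obtain ⟨m, rfl⟩ : ∃ m, n = m + 1 := ⟨n - 1, by omega⟩
          have hexp : a * (m + 1) = a * m + a := by ring
          simp only [Nat.add_sub_cancel]
          omega
        have := IHn (n - 1) (by omega) (by omega) A hA f' hdeg' hmult'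
        exact hf'0 this
      · have : n = 1 := by omega
        rw [this, mul_one] at hdeg
        omega

end GridSpreadAux

/-- A grid `A_1 × ⋯ × A_r ⊆ F^r` with `|A_i| = a` (so `k = a^r` points) is algebraically
spread; in fact, for every `n ≥ 1`, every polynomial of degree `< a n` vanishing to
multiplicity at least `n` at every grid point is the zero polynomial. -/
theorem grid_algebraicallySpread
    (F : Type) [Field F] (r a : ℕ) (hr : 1 ≤ r) (ha : 1 ≤ a)
    (A : Fin r → Finset F) (hA : ∀ i, (A i).card = a) :
    AlgebraicallySpread F r {p : Fin r → F | ∀ i, p i ∈ A i} ∧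
    ∀ n : ℕ, 0 < n → ∀ f : MvPolynomial (Fin r) F,
      f.totalDegree < a * n →
      (∀ p : Fin r → F, (∀ i, p i ∈ A i) → MultGE f p n) → f = 0 := by
  classical
  have mainpart : ∀ n : ℕ, 0 < n → ∀ f : MvPolynomial (Fin r) F,
      f.totalDegree < a * n →
      (∀ p : Fin r → F, (∀ i, p i ∈ A i) → MultGE f p n) → f = 0 := by
    intro n hn f hdeg hmult
    refine GridSpreadAux.main_lemma a r n hn A hA f hdeg ?_
    intro p hp
    exact (GridSpreadAux.multGE_iff f p n).mp (hmult p hp)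
  refine ⟨⟨?_, ?_⟩, mainpart⟩
  · have hset : {p : Fin r → F | ∀ i, p i ∈ A i}
        = Set.pi Set.univ (fun i => (A i : Set F)) := by
      ext p; simp [Set.mem_pi]
    rw [hset]
    exact Set.Finite.pi fun i => (A i).finite_toSet
  · intro ε hε
    refine ⟨0, ?_⟩
    intro n hn f hdeg hmult
    have hcard : ({p : Fin r → F | ∀ i, p i ∈ A i}).ncard = a ^ r := by
      have hset : {p : Fin r → F | ∀ i, p i ∈ A i} = ↑(Fintype.piFinset A) := by
        ext p; simp [Fintype.mem_piFinset]
      rw [hset, Set.ncard_coe_finset, Fintype.card_piFinset]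
      simp [hA]
    have hr0 : r ≠ 0 := Nat.one_le_iff_ne_zero.mp hr
    have hrne : (r : ℝ) ≠ 0 := by exact_mod_cast hr0
    have h1 : ((a : ℝ) ^ r) ^ ((1 : ℝ) / r) = (a : ℝ) := by
      rw [← Real.rpow_natCast (a : ℝ) r, ← Real.rpow_mul (by positivity),
        mul_one_div, div_self hrne, Real.rpow_one]
    have h2 : (f.totalDegree : ℝ) < (a : ℝ) * n := by
      have hc : (f.totalDegree : ℝ)
          < (1 - ε) * ((a : ℝ) * n) := by
        have := hdeg
        rw [hcard] at this
        push_cast at this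
        rw [h1] at this
        linarith [this]
      have hle : (1 - ε) * ((a : ℝ) * n) ≤ 1 * ((a : ℝ) * n) := by
        apply mul_le_mul_of_nonneg_right (by linarith) (by positivity)
      linarith
    have hd : f.totalDegree < a * n := by exact_mod_cast h2
    exact mainpart n hn f hd hmult
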